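/- Let n ≥ 1, q = 3^n, C_0 the nonzero squares of F_q, C_1 the nonsquares, α, β, γ, θ ∈ F_q^* with γ a nonsquare, θ a nonzero square, and α, β both squares or both nonsquares. Let m ∈ {0,1} with m = 0 if α is a square and m = 1 if α is a nonsquare. Define f : F_q → F_q by f(0) = 0, f(x) = α(x^3 + γx^2 + γ^2 x) for x ∈ C_0, f(x) = β(x^3 + θx^2 + θ^2 x) for x ∈ C_1 (so f is a bijection). Define u(x) = Σ_{j=0}^{n-1} Σ_{k=0}^{n-1} γ·(α^{-1}γ^{-3}x)^((3^j+3^k)/2) and v(x) = Σ_{j=0}^{n-1} Σ_{k=0}^{n-1} θ·(β^{-1}θ^{-3}x)^((3^j+3^k)/2), and g(x) = -u(x)(1 + (-1)^m x^((q-1)/2)) - v(x)(1 + (-1)^(m+1) x^((q-1)/2)). Then g(f(c)) = c for every c ∈ F_q. -/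

import Mathlib

open Finset

private lemma odd3pow (j : ℕ) : ∃ a, 3 ^ j = 2 * a + 1 := by
  rcases (Odd.pow (Nat.odd_iff.mpr rfl) : Odd (3 ^ j)) with ⟨a, ha⟩
  exact ⟨a, by omega⟩

section Aux

variable {F : Type*} [Field F] [Fintype F]

private lemma aux_char (n : ℕ) (hcard : Fintype.card F = 3 ^ n) : CharP F 3 := by
  have hp : CharP F (ringChar F) := ringChar.charP F
  obtain ⟨n', hprime, hc⟩ := FiniteField.card F (ringChar F)
  have hdvd : ringChar F ∣ 3 ^ n := by
    rw [← hcard, hc]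
    exact dvd_pow_self _ (by exact_mod_cast n'.ne_zero)
  have h3 : ringChar F = 3 :=
    (Nat.prime_dvd_prime_iff_eq hprime (by norm_num)).mp (hprime.dvd_of_dvd_pow hdvd)
  rw [← h3]; exact hp

private lemma pow_half_sq (n : ℕ) (hcard : Fintype.card F = 3 ^ n)
    {x : F} (hx0 : x ≠ 0) (hx : IsSquare x) : x ^ ((3 ^ n - 1) / 2) = 1 := by
  obtain ⟨t, rfl⟩ := hx
  have ht : t ≠ 0 := by rintro rfl; simp at hx0
  obtain ⟨an, han⟩ := odd3pow n
  have h2 : 2 * ((3 ^ n - 1) / 2) = 3 ^ n - 1 := by omega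
  calc (t * t) ^ ((3 ^ n - 1) / 2) = t ^ (2 * ((3 ^ n - 1) / 2)) := by
        rw [two_mul, pow_add]; rw [mul_pow]
    _ = t ^ (Fintype.card F - 1) := by rw [h2, hcard]
    _ = 1 := FiniteField.pow_card_sub_one_eq_one t ht

private lemma pow_half_nsq (n : ℕ) (hcard : Fintype.card F = 3 ^ n)
    {x : F} (hx : ¬ IsSquare x) : x ^ ((3 ^ n - 1) / 2) = -1 := by
  have hx0 : x ≠ 0 := by rintro rfl; exact hx (by exact ⟨0, by ring⟩)
  haveI := aux_char n hcard
  have hchar : ringChar F ≠ 2 := by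
    have : ringChar F = 3 := (CharP.ringChar_of_prime_eq_zero (by norm_num)
      (CharP.cast_eq_zero F 3))
    omega
  have hiff := FiniteField.isSquare_iff hchar hx0
  obtain ⟨an, han⟩ := odd3pow n
  have hc2 : Fintype.card F / 2 = (3 ^ n - 1) / 2 := by rw [hcard]; omega
  rw [hc2] at hiff
  have h2 : 2 * ((3 ^ n - 1) / 2) = 3 ^ n - 1 := by omega
  have hsq : (x ^ ((3 ^ n - 1) / 2)) ^ 2 = 1 := by
    rw [← pow_mul, mul_comm, h2, ← hcard]
    exact FiniteField.pow_card_sub_one_eq_one x hx0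
  have := mul_eq_zero.mp (show (x ^ ((3 ^ n - 1) / 2) - 1) *
      (x ^ ((3 ^ n - 1) / 2) + 1) = 0 by linear_combination hsq)
  rcases this with h | h
  · exact absurd (hiff.mpr (sub_eq_zero.mp h)) hx
  · exact eq_neg_of_add_eq_zero_left h

private lemma key_sum (n : ℕ) (hcard : Fintype.card F = 3 ^ n)
    {r : F} (hr : ¬ IsSquare r) :
    ∑ j ∈ range n, ∑ k ∈ range n, (r * (r - 1) ^ 2) ^ ((3 ^ j + 3 ^ k) / 2) = r := by
  haveI := aux_char n hcard
  haveI : Fact (Nat.Prime 3) := ⟨by norm_num⟩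
  have h3 : (3 : F) = 0 := CharP.cast_eq_zero F 3
  set w := r * (r - 1) ^ 2 with hw
  have hstep : ∀ j k : ℕ, w ^ ((3 ^ j + 3 ^ k) / 2)
      = w * w ^ ((3 ^ j - 1) / 2) * w ^ ((3 ^ k - 1) / 2) := by
    intro j k
    obtain ⟨aj, haj⟩ := odd3pow j; obtain ⟨ak, hak⟩ := odd3pow k
    have he : (3 ^ j + 3 ^ k) / 2 = 1 + (3 ^ j - 1) / 2 + (3 ^ k - 1) / 2 := by omega
    rw [he, pow_add, pow_add, pow_one]
  set A := ∑ j ∈ range n, w ^ ((3 ^ j - 1) / 2) with hA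
  have hsum : (∑ j ∈ range n, ∑ k ∈ range n, w ^ ((3 ^ j + 3 ^ k) / 2)) = w * A * A := by
    simp_rw [hstep, ← Finset.mul_sum, ← Finset.sum_mul, ← Finset.mul_sum]
    rfl
  have hterm : ∀ j : ℕ, (r - 1) * w ^ ((3 ^ j - 1) / 2)
      = r ^ ((3 ^ (j + 1) - 1) / 2) - r ^ ((3 ^ j - 1) / 2) := by
    intro j
    obtain ⟨aj, haj⟩ := odd3pow j
    have h2e : 2 * ((3 ^ j - 1) / 2) = 3 ^ j - 1 := by omega
    have hwpow : w ^ ((3 ^ j - 1) / 2)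
        = r ^ ((3 ^ j - 1) / 2) * (r - 1) ^ (3 ^ j - 1) := by
      rw [hw, mul_pow, ← pow_mul, h2e]
    have hfrob : (r - 1) ^ (3 ^ j : ℕ) = r ^ (3 ^ j : ℕ) - 1 := by
      have := sub_pow_char_pow (p := 3) (x := r) (y := 1) (n := j)
      simpa using this
    have h1 : (r - 1) ^ (3 ^ j - 1) * (r - 1) = (r - 1) ^ (3 ^ j : ℕ) := by
      rw [← pow_succ]; congr 1; omega
    have hexp : (3 ^ j - 1) / 2 + 3 ^ j = (3 ^ (j + 1) - 1) / 2 := by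
      have h31 : (3 : ℕ) ^ (j + 1) = 3 ^ j * 3 := pow_succ 3 j
      omega
    calc (r - 1) * w ^ ((3 ^ j - 1) / 2)
        = r ^ ((3 ^ j - 1) / 2) * ((r - 1) ^ (3 ^ j - 1) * (r - 1)) := by
          rw [hwpow]; ring
      _ = r ^ ((3 ^ j - 1) / 2) * (r ^ (3 ^ j : ℕ) - 1) := by rw [h1, hfrob]
      _ = r ^ ((3 ^ j - 1) / 2 + 3 ^ j) - r ^ ((3 ^ j - 1) / 2) := by
          rw [pow_add]; ring
      _ = r ^ ((3 ^ (j + 1) - 1) / 2) - r ^ ((3 ^ j - 1) / 2) := by rw [hexp]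
  have htel : (r - 1) * A = 1 := by
    rw [hA, Finset.mul_sum]
    simp_rw [hterm]
    rw [Finset.sum_range_sub (fun j => r ^ ((3 ^ j - 1) / 2))]
    simp only [pow_zero, Nat.zero_lt_one, pow_one]
    rw [pow_half_nsq n hcard hr]
    linear_combination -h3
  rw [hsum]
  calc w * A * A = r * ((r - 1) * A) ^ 2 := by rw [hw]; ring
    _ = r := by rw [htel]; ring

private lemma nsq_mul_inv_sq {x y : F} (hx : ¬ IsSquare x) (hy : IsSquare y)
    (hy0 : y ≠ 0) : ¬ IsSquare (x * y⁻¹) := by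
  intro h
  apply hx
  have hxe : x = (x * y⁻¹) * y := by field_simp
  rw [hxe]; exact h.mul hy

private lemma sq_mul_inv_nsq {x y : F} (hx : IsSquare x) (hx0 : x ≠ 0)
    (hy : ¬ IsSquare y) : ¬ IsSquare (x * y⁻¹) := by
  intro h
  apply hy
  have hy0 : y ≠ 0 := by rintro rfl; exact hy ⟨0, by ring⟩
  have hye : y = x * (x * y⁻¹)⁻¹ := by field_simp
  rw [hye]; exact hx.mul h.inv

private lemma nsq_mul_sq {x s : F} (hx : ¬ IsSquare x) (hs : s ≠ 0) :
    ¬ IsSquare (x * s ^ 2) := by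
  intro h
  apply hx
  have hs1 : s * s⁻¹ = 1 := mul_inv_cancel₀ hs
  have hxe : x = (x * s ^ 2) * (s⁻¹ * s⁻¹) := by
    calc x = x * (s * s⁻¹) * (s * s⁻¹) := by rw [hs1]; ring
      _ = (x * s ^ 2) * (s⁻¹ * s⁻¹) := by ring
  rw [hxe]; exact h.mul ⟨s⁻¹, rfl⟩

/-- The main branch computation. -/
private lemma branch_sum (n : ℕ) (hcard : Fintype.card F = 3 ^ n)
    {δ c a : F} (hδ : δ ≠ 0) (ha : a ≠ 0) (hr : ¬ IsSquare (c * δ⁻¹)) :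
    ∑ j ∈ range n, ∑ k ∈ range n,
      δ * (a⁻¹ * δ⁻¹ ^ 3 * (a * (c ^ 3 + δ * c ^ 2 + δ ^ 2 * c))) ^ ((3 ^ j + 3 ^ k) / 2)
      = c := by
  haveI := aux_char n hcard
  have h3 : (3 : F) = 0 := CharP.cast_eq_zero F 3
  set r := c * δ⁻¹ with hrdef
  have hbase : a⁻¹ * δ⁻¹ ^ 3 * (a * (c ^ 3 + δ * c ^ 2 + δ ^ 2 * c))
      = r * (r - 1) ^ 2 := by
    rw [hrdef]
    field_simp
    ring_nf
    linear_combination (c ^ 2 * δ) * h3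
  rw [hbase]
  simp_rw [← Finset.mul_sum]
  rw [key_sum n hcard hr, hrdef]
  field_simp

end Aux

theorem stmt_16 {F : Type*} [Field F] [Fintype F] (n : ℕ) (hn : 1 ≤ n)
    (hcard : Fintype.card F = 3 ^ n)
    (α β γ θ : F) (hα : α ≠ 0) (hβ : β ≠ 0) (hθ0 : θ ≠ 0)
    (hγ : ¬ IsSquare γ) (hθ : IsSquare θ) (hαβ : IsSquare α ↔ IsSquare β)
    (m : ℕ) (hm : (IsSquare α ∧ m = 0) ∨ (¬ IsSquare α ∧ m = 1))
    (f u v g : F → F)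
    (hf0 : f 0 = 0)
    (hfs : ∀ x : F, x ≠ 0 → IsSquare x → f x = α * (x ^ 3 + γ * x ^ 2 + γ ^ 2 * x))
    (hfn : ∀ x : F, x ≠ 0 → ¬ IsSquare x → f x = β * (x ^ 3 + θ * x ^ 2 + θ ^ 2 * x))
    (hu : ∀ x, u x = ∑ j ∈ Finset.range n, ∑ k ∈ Finset.range n,
        γ * (α⁻¹ * γ⁻¹ ^ 3 * x) ^ ((3 ^ j + 3 ^ k) / 2))
    (hv : ∀ x, v x = ∑ j ∈ Finset.range n, ∑ k ∈ Finset.range n,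
        θ * (β⁻¹ * θ⁻¹ ^ 3 * x) ^ ((3 ^ j + 3 ^ k) / 2))
    (hg : ∀ x, g x = -(u x) * (1 + (-1 : F) ^ m * x ^ ((3 ^ n - 1) / 2)) -
        v x * (1 + (-1 : F) ^ (m + 1) * x ^ ((3 ^ n - 1) / 2))) :
    ∀ c : F, g (f c) = c := by
  intro c
  haveI hp := aux_char n hcard
  have h3 : (3 : F) = 0 := CharP.cast_eq_zero F 3
  by_cases hc : c = 0
  · subst hc
    rw [hf0, hg]
    have hexp0 : ∀ j k : ℕ, (3 ^ j + 3 ^ k) / 2 ≠ 0 := by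
      intro j k
      obtain ⟨aj, haj⟩ := odd3pow j; obtain ⟨ak, hak⟩ := odd3pow k
      omega
    have hu0 : u 0 = 0 := by
      rw [hu]
      refine Finset.sum_eq_zero fun j _ => Finset.sum_eq_zero fun k _ => ?_
      rw [mul_zero, zero_pow (hexp0 j k), mul_zero]
    have hv0 : v 0 = 0 := by
      rw [hv]
      refine Finset.sum_eq_zero fun j _ => Finset.sum_eq_zero fun k _ => ?_
      rw [mul_zero, zero_pow (hexp0 j k), mul_zero]
    rw [hu0, hv0]; ring
  · by_cases hsq : IsSquare c
    · -- square branch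
      have hγ0 : γ ≠ 0 := by rintro rfl; exact hγ ⟨0, by ring⟩
      have hcγ : c ≠ γ := by rintro rfl; exact hγ hsq
      have hr : ¬ IsSquare (c * γ⁻¹) := sq_mul_inv_nsq hsq hc hγ
      rw [hfs c hc hsq]
      set d := α * (c ^ 3 + γ * c ^ 2 + γ ^ 2 * c) with hd
      have hpoly : c ^ 3 + γ * c ^ 2 + γ ^ 2 * c = c * (c - γ) ^ 2 := by
        linear_combination (γ * c ^ 2) * h3
      have hsqfac : IsSquare (c * (c - γ) ^ 2) := by
        obtain ⟨t, ht⟩ := hsq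
        exact ⟨t * (c - γ), by rw [ht]; ring⟩
      have hfac0 : c * (c - γ) ^ 2 ≠ 0 :=
        mul_ne_zero hc (pow_ne_zero 2 (sub_ne_zero.mpr hcγ))
      have hdN : d ^ ((3 ^ n - 1) / 2) = (-1 : F) ^ m := by
        rw [hd, hpoly, mul_pow, pow_half_sq n hcard hfac0 hsqfac, mul_one]
        rcases hm with ⟨hα2, rfl⟩ | ⟨hα2, rfl⟩
        · rw [pow_half_sq n hcard hα hα2]; norm_num
        · rw [pow_half_nsq n hcard hα2]; norm_num
      have hucoef : (1 : F) + (-1) ^ m * d ^ ((3 ^ n - 1) / 2) = 2 := by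
        rw [hdN, ← pow_add]
        have h2m : ((-1 : F)) ^ (m + m) = 1 := by
          rw [← two_mul, pow_mul]; norm_num
        rw [h2m]; norm_num
      have hvcoef : (1 : F) + (-1) ^ (m + 1) * d ^ ((3 ^ n - 1) / 2) = 0 := by
        rw [hdN, ← pow_add]
        have h2m : ((-1 : F)) ^ (m + 1 + m) = -1 := by
          rw [show m + 1 + m = 2 * m + 1 by omega, pow_succ, pow_mul]; norm_num
        rw [h2m]; ring
      have huval : u d = c := by
        rw [hu, hd]
        exact branch_sum n hcard hγ0 hα hr
      rw [hg, hucoef, hvcoef, huval]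
      linear_combination (-c) * h3
    · -- nonsquare branch
      have hcθ : c ≠ θ := by rintro rfl; exact hsq hθ
      have hr : ¬ IsSquare (c * θ⁻¹) := nsq_mul_inv_sq hsq hθ hθ0
      rw [hfn c hc hsq]
      set d := β * (c ^ 3 + θ * c ^ 2 + θ ^ 2 * c) with hd
      have hpoly : c ^ 3 + θ * c ^ 2 + θ ^ 2 * c = c * (c - θ) ^ 2 := by
        linear_combination (θ * c ^ 2) * h3
      have hcθ0 : c - θ ≠ 0 := sub_ne_zero.mpr hcθ
      have hnsqfac : ¬ IsSquare (c * (c - θ) ^ 2) := nsq_mul_sq hsq hcθ0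
      have hdN : d ^ ((3 ^ n - 1) / 2) = (-1 : F) ^ (m + 1) := by
        rw [hd, hpoly, mul_pow, pow_half_nsq n hcard hnsqfac]
        rcases hm with ⟨hα2, rfl⟩ | ⟨hα2, rfl⟩
        · rw [pow_half_sq n hcard hβ (hαβ.mp hα2)]; norm_num
        · rw [pow_half_nsq n hcard (fun hb => hα2 (hαβ.mpr hb))]; norm_num
      have hucoef : (1 : F) + (-1) ^ m * d ^ ((3 ^ n - 1) / 2) = 0 := by
        rw [hdN, ← pow_add]
        have h2m : ((-1 : F)) ^ (m + (m + 1)) = -1 := by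
          rw [show m + (m + 1) = 2 * m + 1 by omega, pow_succ, pow_mul]; norm_num
        rw [h2m]; ring
      have hvcoef : (1 : F) + (-1) ^ (m + 1) * d ^ ((3 ^ n - 1) / 2) = 2 := by
        rw [hdN, ← pow_add]
        have h2m : ((-1 : F)) ^ (m + 1 + (m + 1)) = 1 := by
          rw [show m + 1 + (m + 1) = 2 * (m + 1) by omega, pow_mul]; norm_num
        rw [h2m]; norm_num
      have hvval : v d = c := by
        rw [hv, hd]
        exact branch_sum n hcard hθ0 hβ hr
      rw [hg, hucoef, hvcoef, hvval]
      linear_combination (-c) * h3
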